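/- Let U, X, Y be finite nonempty sets with a distinguished element x₀ ∈ X, let W assign to each x ∈ X a pmf W(·|x) on Y with W(y|x₀) > 0 for all y, and let α > 0. Then there exists a constant C > 0 (depending only on U, X, Y, W, x₀ and α) such that for every joint pmf P on U × X whose U-marginal satisfies P_U(u) = ∑_x P(u,x) ≥ α for all u ∈ U, the mutual information I of the joint function on U × Y given by (u,y) ↦ ∑_{x∈X} P(u,x)·W(y|x) satisfies I ≤ C·(1 − P_X(x₀))², where P_X(x) = ∑_u P(u,x). -/

import Mathlib

open Real

/-- Mutual information of a joint function `P` on a product of finite alphabets. -/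
noncomputable def mutualInfo {U Y : Type*} [Fintype U] [Fintype Y] (P : U → Y → ℝ) : ℝ :=
  ∑ u, ∑ y, P u y *
    (Real.log (P u y) - Real.log (∑ y', P u y') - Real.log (∑ u', P u' y))

set_option maxHeartbeats 2000000 in
theorem stmt_10 {U X Y : Type*} [Fintype U] [Fintype X] [Fintype Y]
    [Nonempty U] [Nonempty X] [Nonempty Y]
    (x₀ : X) (W : X → Y → ℝ)
    (hW0 : ∀ x y, 0 ≤ W x y) (hW1 : ∀ x, ∑ y, W x y = 1) (hWpos : ∀ y, 0 < W x₀ y)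
    (α : ℝ) (hα : 0 < α) :
    ∃ C > 0, ∀ P : U × X → ℝ, (∀ p, 0 ≤ P p) → (∑ p, P p) = 1 →
      (∀ u, α ≤ ∑ x, P (u, x)) →
      mutualInfo (fun (u : U) (y : Y) => ∑ x, P (u, x) * W x y)
        ≤ C * (1 - ∑ u, P (u, x₀)) ^ 2 := by
  classical
  have hW1' : ∀ x y, W x y ≤ 1 := fun x y => by
    calc W x y ≤ ∑ y', W x y' :=
          Finset.single_le_sum (fun y' _ => hW0 x y') (Finset.mem_univ y)
      _ = 1 := hW1 x
  set S : ℝ := ∑ y : Y, 1 / W x₀ y with hS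
  have hSpos : 0 < S :=
    Finset.sum_pos (fun y _ => by have := hWpos y; positivity) Finset.univ_nonempty
  set C : ℝ := 8 * S / α + 4 * (Fintype.card Y : ℝ) + 1 with hC
  have hCpos : 0 < C := by
    have h1 : 0 < 8 * S / α := by positivity
    have h2 : (0:ℝ) ≤ 4 * (Fintype.card Y : ℝ) := by positivity
    simp only [hC]; linarith
  refine ⟨C, hCpos, ?_⟩
  intro P hP0 hP1 hPU
  set q : U → Y → ℝ := fun u y => ∑ x, P (u, x) * W x y with hqdef
  set pU : U → ℝ := fun u => ∑ x, P (u, x) with hpUdef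
  set qY : Y → ℝ := fun y => ∑ u, q u y with hqYdef
  set ε : ℝ := 1 - ∑ u, P (u, x₀) with hεdef
  -- basic facts
  have hq0 : ∀ u y, 0 ≤ q u y := fun u y =>
    Finset.sum_nonneg (fun x _ => mul_nonneg (hP0 _) (hW0 x y))
  have hrow : ∀ u, ∑ y, q u y = pU u := by
    intro u
    calc ∑ y, q u y = ∑ x, ∑ y, P (u, x) * W x y := Finset.sum_comm
      _ = ∑ x, P (u, x) * ∑ y, W x y := by simp [Finset.mul_sum]
      _ = pU u := by simp [hW1, hpUdef]
  have hpU0 : ∀ u, 0 ≤ pU u := fun u => Finset.sum_nonneg (fun x _ => hP0 _)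
  have hpU_pos : ∀ u, 0 < pU u := fun u => lt_of_lt_of_le hα (hPU u)
  have htot : ∑ u, pU u = 1 := by
    rw [Fintype.sum_prod_type] at hP1
    exact hP1
  have hpU_le_one : ∀ u, pU u ≤ 1 := fun u => by
    calc pU u ≤ ∑ u', pU u' :=
          Finset.single_le_sum (fun u' _ => hpU0 u') (Finset.mem_univ u)
      _ = 1 := htot
  have hqY0 : ∀ y, 0 ≤ qY y := fun y => Finset.sum_nonneg (fun u _ => hq0 u y)
  have hqY_tot : ∑ y, qY y = 1 := by
    calc ∑ y, qY y = ∑ u, ∑ y, q u y := Finset.sum_comm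
      _ = ∑ u, pU u := Finset.sum_congr rfl (fun u _ => hrow u)
      _ = 1 := htot
  have hqY_le_one : ∀ y, qY y ≤ 1 := fun y => by
    calc qY y ≤ ∑ y', qY y' :=
          Finset.single_le_sum (fun y' _ => hqY0 y') (Finset.mem_univ y)
      _ = 1 := hqY_tot
  -- the "defect" e u
  set e : U → ℝ := fun u => ∑ x ∈ Finset.univ.erase x₀, P (u, x) with hedef
  have he0 : ∀ u, 0 ≤ e u := fun u => Finset.sum_nonneg (fun x _ => hP0 _)
  have hsplit : ∀ u, pU u = P (u, x₀) + e u := fun u =>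
    (Finset.add_sum_erase Finset.univ (fun x => P (u, x)) (Finset.mem_univ x₀)).symm
  have hesum : ∑ u, e u = ε := by
    have : ∑ u, e u = ∑ u, (pU u - P (u, x₀)) :=
      Finset.sum_congr rfl (fun u _ => by rw [hsplit u]; ring)
    rw [this, Finset.sum_sub_distrib, htot, hεdef]
  have he_le : ∀ u, e u ≤ ε := fun u => by
    calc e u ≤ ∑ u', e u' := Finset.single_le_sum (fun u' _ => he0 u') (Finset.mem_univ u)
      _ = ε := hesum
  have hε0 : 0 ≤ ε := hesum ▸ Finset.sum_nonneg (fun u _ => he0 u)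
  -- |q u y - pU u * W x₀ y| ≤ e u
  have hE : ∀ u y, |q u y - pU u * W x₀ y| ≤ e u := by
    intro u y
    have hrepr : q u y - pU u * W x₀ y
        = ∑ x ∈ Finset.univ.erase x₀, P (u, x) * (W x y - W x₀ y) := by
      have h0 : ∑ x ∈ Finset.univ.erase x₀, P (u, x) * (W x y - W x₀ y)
          = ∑ x, P (u, x) * (W x y - W x₀ y) :=
        Finset.sum_erase Finset.univ (by ring)
      rw [h0]
      simp only [hqdef, hpUdef, mul_sub, Finset.sum_sub_distrib, Finset.sum_mul]
    rw [hrepr]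
    calc |∑ x ∈ Finset.univ.erase x₀, P (u, x) * (W x y - W x₀ y)|
        ≤ ∑ x ∈ Finset.univ.erase x₀, |P (u, x) * (W x y - W x₀ y)| :=
          Finset.abs_sum_le_sum_abs _ _
      _ ≤ ∑ x ∈ Finset.univ.erase x₀, P (u, x) := by
          apply Finset.sum_le_sum
          intro x _
          rw [abs_mul, abs_of_nonneg (hP0 _)]
          have hb : |W x y - W x₀ y| ≤ 1 := by
            rw [abs_le]
            refine ⟨?_, ?_⟩
            · have := hW1' x₀ y; have := hW0 x y; linarith
            · have := hW1' x y; have := hW0 x₀ y; linarith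
          calc P (u, x) * |W x y - W x₀ y| ≤ P (u, x) * 1 :=
                mul_le_mul_of_nonneg_left hb (hP0 _)
            _ = P (u, x) := mul_one _
      _ = e u := rfl
  -- |qY y - W x₀ y| ≤ ε
  have hEY : ∀ y, |qY y - W x₀ y| ≤ ε := by
    intro y
    have hrepr : qY y - W x₀ y = ∑ u, (q u y - pU u * W x₀ y) := by
      rw [Finset.sum_sub_distrib, ← Finset.sum_mul, htot, one_mul]
    rw [hrepr]
    calc |∑ u, (q u y - pU u * W x₀ y)| ≤ ∑ u, |q u y - pU u * W x₀ y| :=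
          Finset.abs_sum_le_sum_abs _ _
      _ ≤ ∑ u, e u := Finset.sum_le_sum (fun u _ => hE u y)
      _ = ε := hesum
  -- |q - pU * qY| ≤ e u + pU u * ε
  have hΔ : ∀ u y, |q u y - pU u * qY y| ≤ e u + pU u * ε := by
    intro u y
    have hrepr : q u y - pU u * qY y
        = (q u y - pU u * W x₀ y) - pU u * (qY y - W x₀ y) := by ring
    rw [hrepr]
    calc |(q u y - pU u * W x₀ y) - pU u * (qY y - W x₀ y)|
        ≤ |q u y - pU u * W x₀ y| + |pU u * (qY y - W x₀ y)| := abs_sub _ _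
      _ ≤ e u + pU u * ε := by
          have h1 := hE u y
          have h2 : |pU u * (qY y - W x₀ y)| = pU u * |qY y - W x₀ y| := by
            rw [abs_mul, abs_of_nonneg (hpU0 u)]
          have h3 := hEY y
          have h4 := hpU0 u
          rw [h2]
          have : pU u * |qY y - W x₀ y| ≤ pU u * ε :=
            mul_le_mul_of_nonneg_left h3 h4
          linarith
  -- rewrite the mutual information
  have hMI : mutualInfo q = ∑ u, ∑ y, q u y * (log (q u y) - log (pU u) - log (qY y)) := by
    rw [mutualInfo]
    refine Finset.sum_congr rfl fun u _ => Finset.sum_congr rfl fun y _ => ?_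
    rw [hrow u]
  have hgoal : mutualInfo (fun u y => ∑ x, P (u, x) * W x y) = mutualInfo q := rfl
  rw [hgoal]
  by_cases hhalf : ε ≤ 1/2
  · -- small ε case : chi-square bound
    have hqYw : ∀ y, (1 - ε) * W x₀ y ≤ qY y := by
      intro y
      have h1 : ∀ u, P (u, x₀) * W x₀ y ≤ q u y := fun u =>
        Finset.single_le_sum (f := fun x => P (u, x) * W x y)
          (fun x _ => mul_nonneg (hP0 _) (hW0 x y)) (Finset.mem_univ x₀)
      calc (1 - ε) * W x₀ y = ∑ u, P (u, x₀) * W x₀ y := by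
            rw [← Finset.sum_mul]; congr 1; rw [hεdef]; ring
        _ ≤ ∑ u, q u y := Finset.sum_le_sum (fun u _ => h1 u)
        _ = qY y := rfl
    have hqY_half : ∀ y, W x₀ y / 2 ≤ qY y := by
      intro y
      have h := hqYw y
      have hw := hWpos y
      nlinarith
    have hqY_pos : ∀ y, 0 < qY y := fun y =>
      lt_of_lt_of_le (by have := hWpos y; positivity) (hqY_half y)
    -- step 1: log bound
    have step1 : ∀ u y, q u y * (log (q u y) - log (pU u) - log (qY y))
        ≤ (q u y)^2 / (pU u * qY y) - q u y := by
      intro u y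
      rcases eq_or_lt_of_le (hq0 u y) with h | h
      · simp [← h]
      · have hDpos : 0 < pU u * qY y := mul_pos (hpU_pos u) (hqY_pos y)
        have hlog : log (q u y) - log (pU u) - log (qY y)
            = log (q u y / (pU u * qY y)) := by
          rw [Real.log_div (ne_of_gt h) (ne_of_gt hDpos),
            Real.log_mul (ne_of_gt (hpU_pos u)) (ne_of_gt (hqY_pos y))]
          ring
        rw [hlog]
        have hl := Real.log_le_sub_one_of_pos (div_pos h hDpos)
        calc q u y * log (q u y / (pU u * qY y))
            ≤ q u y * (q u y / (pU u * qY y) - 1) :=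
              mul_le_mul_of_nonneg_left hl (le_of_lt h)
          _ = (q u y)^2 / (pU u * qY y) - q u y := by
              field_simp
    have hDne : ∀ u y, pU u * qY y ≠ 0 := fun u y =>
      ne_of_gt (mul_pos (hpU_pos u) (hqY_pos y))
    have expand : ∀ u y, (q u y)^2 / (pU u * qY y) - q u y
        = (q u y - pU u * qY y)^2 / (pU u * qY y) + (q u y - pU u * qY y) := by
      intro u y
      rw [div_add' _ _ _ (hDne u y), div_sub' (hDne u y)]
      ring
    have hsumq : ∑ u, ∑ y, q u y = 1 := by
      calc ∑ u, ∑ y, q u y = ∑ u, pU u := Finset.sum_congr rfl (fun u _ => hrow u)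
        _ = 1 := htot
    have hsumD : ∑ u, ∑ y, pU u * qY y = 1 := by
      calc ∑ u, ∑ y, pU u * qY y = ∑ u, pU u * ∑ y, qY y := by
            simp [Finset.mul_sum]
        _ = ∑ u, pU u := by rw [hqY_tot]; simp
        _ = 1 := htot
    have hzero : ∑ u, ∑ y, (q u y - pU u * qY y) = 0 := by
      simp only [Finset.sum_sub_distrib]
      rw [hsumq, hsumD]
      ring
    have main : mutualInfo q ≤ ∑ u, ∑ y, (q u y - pU u * qY y)^2 / (pU u * qY y) := by
      rw [hMI]
      calc ∑ u, ∑ y, q u y * (log (q u y) - log (pU u) - log (qY y))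
          ≤ ∑ u, ∑ y, ((q u y)^2 / (pU u * qY y) - q u y) :=
            Finset.sum_le_sum (fun u _ => Finset.sum_le_sum (fun y _ => step1 u y))
        _ = ∑ u, ∑ y, ((q u y - pU u * qY y)^2 / (pU u * qY y) + (q u y - pU u * qY y)) :=
            Finset.sum_congr rfl (fun u _ => Finset.sum_congr rfl (fun y _ => expand u y))
        _ = (∑ u, ∑ y, (q u y - pU u * qY y)^2 / (pU u * qY y))
            + ∑ u, ∑ y, (q u y - pU u * qY y) := by
            simp [Finset.sum_add_distrib]
        _ = ∑ u, ∑ y, (q u y - pU u * qY y)^2 / (pU u * qY y) := by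
            rw [hzero]; ring
    -- step 3: termwise bound
    have hterm : ∀ u y, (q u y - pU u * qY y)^2 / (pU u * qY y)
        ≤ ((e u + pU u * ε) * (2 * ε)) / (α * (W x₀ y / 2)) := by
      intro u y
      have habs := hΔ u y
      have hb1 : e u + pU u * ε ≤ 2 * ε := by
        have h1 := he_le u
        have h2 := hpU_le_one u
        nlinarith [hε0, hpU0 u]
      have h0 : 0 ≤ e u + pU u * ε := by
        have := he0 u; have := hpU0 u; nlinarith [hε0]
      have hnum : (q u y - pU u * qY y)^2 ≤ (e u + pU u * ε) * (2 * ε) := by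
        have hsq : (q u y - pU u * qY y)^2 ≤ (e u + pU u * ε)^2 := by
          rw [← sq_abs]
          exact pow_le_pow_left₀ (abs_nonneg _) habs 2
        have h2 : (e u + pU u * ε)^2 ≤ (e u + pU u * ε) * (2 * ε) := by
          rw [sq]
          exact mul_le_mul_of_nonneg_left hb1 h0
        linarith
      have hD : α * (W x₀ y / 2) ≤ pU u * qY y := by
        calc α * (W x₀ y / 2) ≤ α * qY y :=
              mul_le_mul_of_nonneg_left (hqY_half y) hα.le
          _ ≤ pU u * qY y := mul_le_mul_of_nonneg_right (hPU u) (hqY0 y)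
      have hDpos : 0 < α * (W x₀ y / 2) := by have := hWpos y; positivity
      exact div_le_div₀ (mul_nonneg h0 (by linarith)) hnum hDpos hD
    have hsum_terms : ∑ u, ∑ y, ((e u + pU u * ε) * (2 * ε)) / (α * (W x₀ y / 2))
        = 8 * S / α * ε ^ 2 := by
      have hY : ∑ y, 1 / (α * (W x₀ y / 2)) = 2 / α * S := by
        rw [hS, Finset.mul_sum]
        refine Finset.sum_congr rfl fun y _ => ?_
        have hw := (hWpos y).ne'
        field_simp
      have hU : ∑ u, (e u + pU u * ε) = 2 * ε := by
        rw [Finset.sum_add_distrib, hesum, ← Finset.sum_mul, htot]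
        ring
      calc ∑ u, ∑ y, ((e u + pU u * ε) * (2 * ε)) / (α * (W x₀ y / 2))
          = ∑ u, ((e u + pU u * ε) * (2 * ε)) * ∑ y, 1 / (α * (W x₀ y / 2)) := by
            refine Finset.sum_congr rfl fun u _ => ?_
            rw [Finset.mul_sum]
            refine Finset.sum_congr rfl fun y _ => ?_
            rw [div_eq_mul_one_div]
        _ = (∑ u, (e u + pU u * ε)) * (2 * ε) * (2 / α * S) := by
            rw [hY, ← Finset.sum_mul, ← Finset.sum_mul]
        _ = 8 * S / α * ε ^ 2 := by
            rw [hU]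
            field_simp
            ring
    calc mutualInfo q ≤ ∑ u, ∑ y, (q u y - pU u * qY y)^2 / (pU u * qY y) := main
      _ ≤ ∑ u, ∑ y, ((e u + pU u * ε) * (2 * ε)) / (α * (W x₀ y / 2)) :=
          Finset.sum_le_sum (fun u _ => Finset.sum_le_sum (fun y _ => hterm u y))
      _ = 8 * S / α * ε ^ 2 := hsum_terms
      _ ≤ C * ε ^ 2 := by
          have hC' : 8 * S / α ≤ C := by
            simp only [hC]
            have : (0:ℝ) ≤ 4 * (Fintype.card Y : ℝ) := by positivity
            linarith
          exact mul_le_mul_of_nonneg_right hC' (sq_nonneg ε)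
  · -- large ε case : crude bound
    push_neg at hhalf
    have h1 : ∀ u y, q u y * (log (q u y) - log (pU u)) ≤ 0 := by
      intro u y
      rcases eq_or_lt_of_le (hq0 u y) with h | h
      · simp [← h]
      · have hle : q u y ≤ pU u := by
          calc q u y ≤ ∑ y', q u y' :=
                Finset.single_le_sum (fun y' _ => hq0 u y') (Finset.mem_univ y)
            _ = pU u := hrow u
        have hlog : log (q u y) ≤ log (pU u) := Real.log_le_log h hle
        nlinarith
    have hMI2 : mutualInfo q ≤ ∑ y, -(qY y * log (qY y)) := by
      rw [hMI]
      calc ∑ u, ∑ y, q u y * (log (q u y) - log (pU u) - log (qY y))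
          = ∑ u, ∑ y, (q u y * (log (q u y) - log (pU u)) - q u y * log (qY y)) :=
            Finset.sum_congr rfl (fun u _ => Finset.sum_congr rfl (fun y _ => by ring))
        _ = (∑ u, ∑ y, q u y * (log (q u y) - log (pU u)))
            - ∑ u, ∑ y, q u y * log (qY y) := by
            simp [Finset.sum_sub_distrib]
        _ ≤ 0 - ∑ u, ∑ y, q u y * log (qY y) := by
            have : ∑ u, ∑ y, q u y * (log (q u y) - log (pU u)) ≤ 0 :=
              Finset.sum_nonpos (fun u _ => Finset.sum_nonpos (fun y _ => h1 u y))
            linarith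
        _ = -∑ y, qY y * log (qY y) := by
            rw [Finset.sum_comm (f := fun u y => q u y * log (qY y))]
            rw [zero_sub]
            congr 1
            refine Finset.sum_congr rfl fun y _ => ?_
            rw [← Finset.sum_mul]
        _ = ∑ y, -(qY y * log (qY y)) := by
            rw [← Finset.sum_neg_distrib]
    have h2 : ∀ y, -(qY y * log (qY y)) ≤ 1 := by
      intro y
      rcases eq_or_lt_of_le (hqY0 y) with h | h
      · simp [← h]
      · have hlog : Real.log (qY y)⁻¹ ≤ (qY y)⁻¹ - 1 :=
          Real.log_le_sub_one_of_pos (by positivity)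
        rw [Real.log_inv] at hlog
        have hmul : qY y * (-log (qY y)) ≤ qY y * ((qY y)⁻¹ - 1) :=
          mul_le_mul_of_nonneg_left hlog h.le
        have hinv : qY y * ((qY y)⁻¹ - 1) = 1 - qY y := by
          field_simp
        nlinarith [hqY0 y]
    have hcard : mutualInfo q ≤ (Fintype.card Y : ℝ) := by
      calc mutualInfo q ≤ ∑ y, -(qY y * log (qY y)) := hMI2
        _ ≤ ∑ y : Y, (1:ℝ) := Finset.sum_le_sum (fun y _ => h2 y)
        _ = (Fintype.card Y : ℝ) := by simp
    have hε2 : 1/4 ≤ ε ^ 2 := by nlinarith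
    have hcard0 : (0:ℝ) ≤ (Fintype.card Y : ℝ) := by positivity
    calc mutualInfo q ≤ (Fintype.card Y : ℝ) := hcard
      _ ≤ 4 * (Fintype.card Y : ℝ) * ε ^ 2 := by
          have h4 : 4 * (Fintype.card Y : ℝ) * (1/4) ≤ 4 * (Fintype.card Y : ℝ) * ε ^ 2 :=
            mul_le_mul_of_nonneg_left hε2 (by positivity)
          refine le_trans (le_of_eq ?_) h4
          ring
      _ ≤ C * ε ^ 2 := by
          have hC' : 4 * (Fintype.card Y : ℝ) ≤ C := by
            simp only [hC]
            have : 0 < 8 * S / α := by positivity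
            linarith
          exact mul_le_mul_of_nonneg_right hC' (sq_nonneg ε)
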